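/- Product genericity from separation: let P₀, P₁ be partial orders, M a family of subsets of P₁, and g₀ ⊆ P₀, g₁ ⊆ P₁ filters. Assume (i) g₀ meets every dense subset of P₀; (ii) g₁ meets every dense subset of P₁ that belongs to M; and (iii) for every E ⊆ P₁ with E ∩ g₁ = ∅ of the form E = {p₁ : ∃ p₀ ∈ g₀, (p₀,p₁) ∈ D} for some dense D ⊆ P₀ × P₁, there exists F ∈ M with E ⊆ F and F ∩ g₁ = ∅. Then for every dense D ⊆ P₀ × P₁, the product filter g₀ × g₁ meets D; in other words, there exist p₀ ∈ g₀ and p₁ ∈ g₁ with (p₀, p₁) ∈ D. -/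
import Mathlib


/-- product genericity from separation. -/
theorem product_genericity {P₀ P₁ : Type*} [PartialOrder P₀] [PartialOrder P₁]
    (M : Set (Set P₁)) (g₀ : Set P₀) (g₁ : Set P₁)
    -- g₀ and g₁ are filters
    (hne₀ : g₀.Nonempty)
    (hup₀ : ∀ p q, p ∈ g₀ → p ≤ q → q ∈ g₀)
    (hdir₀ : ∀ p q, p ∈ g₀ → q ∈ g₀ → ∃ r ∈ g₀, r ≤ p ∧ r ≤ q)
    (hne₁ : g₁.Nonempty)
    (hup₁ : ∀ p q, p ∈ g₁ → p ≤ q → q ∈ g₁)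
    (hdir₁ : ∀ p q, p ∈ g₁ → q ∈ g₁ → ∃ r ∈ g₁, r ≤ p ∧ r ≤ q)
    -- (i) g₀ meets every dense subset of P₀
    (hgen₀ : ∀ E : Set P₀, (∀ q, ∃ r ∈ E, r ≤ q) → (g₀ ∩ E).Nonempty)
    -- (ii) g₁ meets every dense subset of P₁ belonging to M
    (hgen₁ : ∀ E ∈ M, (∀ q : P₁, ∃ r ∈ E, r ≤ q) → (g₁ ∩ E).Nonempty)
    -- (iii) separation: projections of dense sets avoided by g₁ can be enlarged
    -- to sets in M avoided by g₁
    (hsep : ∀ D : Set (P₀ × P₁),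
      (∀ q : P₀ × P₁, ∃ r ∈ D, r.1 ≤ q.1 ∧ r.2 ≤ q.2) →
      {p₁ | ∃ p₀ ∈ g₀, (p₀, p₁) ∈ D} ∩ g₁ = ∅ →
      ∃ F ∈ M, {p₁ | ∃ p₀ ∈ g₀, (p₀, p₁) ∈ D} ⊆ F ∧ F ∩ g₁ = ∅) :
    -- conclusion: g₀ × g₁ meets every dense subset of P₀ × P₁
    ∀ D : Set (P₀ × P₁),
      (∀ q : P₀ × P₁, ∃ r ∈ D, r.1 ≤ q.1 ∧ r.2 ≤ q.2) →
      ∃ p₀ ∈ g₀, ∃ p₁ ∈ g₁, (p₀, p₁) ∈ D := by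
  intro D hD
  by_contra h
  push_neg at h
  have hE : {p₁ | ∃ p₀ ∈ g₀, (p₀, p₁) ∈ D} ∩ g₁ = ∅ := by
    ext p₁
    simp only [Set.mem_inter_iff, Set.mem_setOf_eq, Set.mem_empty_iff_false, iff_false]
    rintro ⟨⟨p₀, hp₀, hpD⟩, hp₁⟩
    exact h p₀ hp₀ p₁ hp₁ hpD
  obtain ⟨F, hFM, hEF, hFg⟩ := hsep D hD hE
  -- F is dense
  have hFdense : ∀ q : P₁, ∃ r ∈ F, r ≤ q := by
    intro q₁
    -- the set of p₀ with a witness below q₁ is dense in P₀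
    have hdense : ∀ q₀ : P₀, ∃ r ∈ {p₀ | ∃ p₁ ≤ q₁, (p₀, p₁) ∈ D}, r ≤ q₀ := by
      intro q₀
      obtain ⟨r, hrD, hr0, hr1⟩ := hD (q₀, q₁)
      exact ⟨r.1, ⟨r.2, hr1, hrD⟩, hr0⟩
    obtain ⟨p₀, hp₀g, p₁, hp₁le, hpD⟩ := hgen₀ _ hdense
    exact ⟨p₁, hEF ⟨p₀, hp₀g, hpD⟩, hp₁le⟩
  obtain ⟨p₁, hp₁g, hp₁F⟩ := hgen₁ F hFM hFdense
  exact absurd (Set.eq_empty_iff_forall_notMem.mp hFg p₁ ⟨hp₁F, hp₁g⟩) (fun x => x)
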